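/- Let X, Y be real normed spaces and T : X → Y a nonzero bounded linear operator whose norm attainment set M_T = {x ∈ S_X : ‖Tx‖ = ‖T‖} equals {x₀, −x₀} for a single pair of antipodal points. Then x₀ is an extreme point of the closed unit ball B_X. -/

import Mathlib

theorem stmt_4
    {X Y : Type*} [NormedAddCommGroup X] [NormedSpace ℝ X]
    [NormedAddCommGroup Y] [NormedSpace ℝ Y]
    (T : X →L[ℝ] Y) (hT : T ≠ 0) (x₀ : X)
    (hM : {x : X | ‖x‖ = 1 ∧ ‖T x‖ = ‖T‖} = {x₀, -x₀}) :
    x₀ ∈ Set.extremePoints ℝ (Metric.closedBall (0 : X) 1) := by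
  have hTpos : 0 < ‖T‖ := by
    simpa [norm_pos_iff] using hT
  have hx₀ : ‖x₀‖ = 1 ∧ ‖T x₀‖ = ‖T‖ := by
    have : x₀ ∈ ({x₀, -x₀} : Set X) := by simp
    rw [← hM] at this
    exact this
  constructor
  · simpa [Metric.mem_closedBall, dist_zero_right] using le_of_eq hx₀.1
  · rintro x₁ h₁ x₂ h₂ hseg
    simp only [Metric.mem_closedBall, dist_zero_right] at h₁ h₂
    obtain ⟨a, b, ha, hb, hab, hx⟩ := hseg
    -- show ‖T x₁‖ = ‖T‖ and ‖T x₂‖ = ‖T‖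
    have hle1 : ‖T x₁‖ ≤ ‖T‖ := le_trans (T.le_opNorm x₁) (by nlinarith)
    have hle2 : ‖T x₂‖ ≤ ‖T‖ := le_trans (T.le_opNorm x₂) (by nlinarith)
    have hsum : ‖T‖ ≤ a * ‖T x₁‖ + b * ‖T x₂‖ := by
      calc ‖T‖ = ‖T x₀‖ := hx₀.2.symm
        _ = ‖T (a • x₁ + b • x₂)‖ := by rw [hx]
        _ ≤ ‖T (a • x₁)‖ + ‖T (b • x₂)‖ := by rw [map_add]; exact norm_add_le _ _
        _ = a * ‖T x₁‖ + b * ‖T x₂‖ := by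
            rw [map_smul, map_smul, norm_smul, norm_smul, Real.norm_eq_abs,
              abs_of_pos ha, Real.norm_eq_abs, abs_of_pos hb]
    have hTx₁ : ‖T x₁‖ = ‖T‖ := by nlinarith
    have hTx₂ : ‖T x₂‖ = ‖T‖ := by nlinarith
    have hn₁ : ‖x₁‖ = 1 := by
      have := T.le_opNorm x₁
      nlinarith
    have hn₂ : ‖x₂‖ = 1 := by
      have := T.le_opNorm x₂
      nlinarith
    have hm₁ : x₁ = x₀ ∨ x₁ = -x₀ := by
      have : x₁ ∈ ({x₀, -x₀} : Set X) := by rw [← hM]; exact ⟨hn₁, hTx₁⟩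
      simpa using this
    have hm₂ : x₂ = x₀ ∨ x₂ = -x₀ := by
      have : x₂ ∈ ({x₀, -x₀} : Set X) := by rw [← hM]; exact ⟨hn₂, hTx₂⟩
      simpa using this
    have hx₀ne : x₀ ≠ 0 := by
      intro h; rw [h] at hx₀; simp at hx₀
    have key : ∀ c : ℝ, c ≠ 1 → x₀ = c • x₀ → False := by
      intro c hc hcx
      apply hx₀ne
      have h2 : (1 - c) • x₀ = 0 := by
        rw [sub_smul, one_smul, ← hcx, sub_self]
      exact (smul_eq_zero.mp h2).resolve_left (sub_ne_zero.mpr (Ne.symm hc))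
    rcases hm₁ with h1 | h1 <;> rcases hm₂ with h2 | h2
    · exact h1
    · exact absurd (key (a - b) (by nlinarith) (by rw [h1, h2, smul_neg] at hx; rw [sub_smul, sub_eq_add_neg]; exact hx.symm)).elim id
    · exact absurd (key (b - a) (by nlinarith) (by rw [h1, h2, smul_neg] at hx; rw [sub_smul, sub_eq_neg_add]; exact hx.symm)).elim id
    · exact absurd (key (-1) (by norm_num) (by rw [h1, h2, smul_neg, smul_neg, ← neg_add, ← add_smul, hab] at hx; simpa using hx.symm)).elim id
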